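/- Let k be a field of characteristic zero, (A, ∗) a finite-dimensional Zinbiel algebra and r ∈ A ⊗ A a symmetric solution of the Zinbiel Yang–Baxter equation, so that ϑ_r(a) = (id ⊗ (L+R)(a) − L(a) ⊗ id)(r) makes (A, ∗, ϑ_r) a triangular Zinbiel bialgebra. Let (B, ⋄, ω) be a quadratic perm algebra with basis {eⱼ} and dual basis {fⱼ}, write r̂ = Σᵢ Σⱼ (xᵢ ⊗ eⱼ) ⊗ (yᵢ ⊗ fⱼ) for r = Σᵢ xᵢ ⊗ yᵢ, and let Δ(a ⊗ b) = (id ⊗ id + τ)(ϑ_r(a) • ν_ω(b)) be the coproduct of the induced infinitesimal bialgebra on (A ⊗ B, ·). Then Δ(a ⊗ b) = (id ⊗ L(a ⊗ b) − L(a ⊗ b) ⊗ id)(r̂) for all a ∈ A, b ∈ B, where L(u) denotes multiplication by u in (A ⊗ B, ·); in particular the induced infinitesimal bialgebra equals the triangular infinitesimal bialgebra associated to the skew-symmetric AYBE solution r̂. -/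

import Mathlib

open TensorProduct

noncomputable section

def IsZinbiel {k A : Type} [Field k] [AddCommGroup A] [Module k A]
    (ast : A →ₗ[k] A →ₗ[k] A) : Prop :=
  ∀ a₁ a₂ a₃ : A, ast a₁ (ast a₂ a₃) = ast (ast a₁ a₂) a₃ + ast (ast a₂ a₁) a₃

def IsPreLie {k A : Type} [Field k] [AddCommGroup A] [Module k A]
    (circ : A →ₗ[k] A →ₗ[k] A) : Prop :=
  ∀ a₁ a₂ a₃ : A,
    circ (circ a₁ a₂) a₃ - circ a₁ (circ a₂ a₃)
      = circ (circ a₂ a₁) a₃ - circ a₂ (circ a₁ a₃)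

def IsPerm {k B : Type} [Field k] [AddCommGroup B] [Module k B]
    (dia : B →ₗ[k] B →ₗ[k] B) : Prop :=
  ∀ b₁ b₂ b₃ : B,
    dia b₁ (dia b₂ b₃) = dia (dia b₁ b₂) b₃ ∧
    dia (dia b₁ b₂) b₃ = dia (dia b₂ b₁) b₃

def IsPrePoisson {k A : Type} [Field k] [AddCommGroup A] [Module k A]
    (ast circ : A →ₗ[k] A →ₗ[k] A) : Prop :=
  IsZinbiel ast ∧ IsPreLie circ ∧
  (∀ a₁ a₂ a₃ : A,
    ast (circ a₁ a₂ - circ a₂ a₁) a₃ = circ a₁ (ast a₂ a₃) - ast a₂ (circ a₁ a₃)) ∧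
  (∀ a₁ a₂ a₃ : A,
    circ (ast a₁ a₂ + ast a₂ a₁) a₃ = ast a₁ (circ a₂ a₃) + ast a₂ (circ a₁ a₃))

def IsPoisson {k P : Type} [Field k] [AddCommGroup P] [Module k P]
    (mul br : P →ₗ[k] P →ₗ[k] P) : Prop :=
  (∀ u v : P, mul u v = mul v u) ∧
  (∀ u v w : P, mul (mul u v) w = mul u (mul v w)) ∧
  (∀ u v : P, br u v = - br v u) ∧
  (∀ u v w : P, br (br u v) w + br (br v w) u + br (br w u) v = 0) ∧
  (∀ u v w : P, br u (mul v w) = mul (br u v) w + mul v (br u w))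

def idm (k M : Type) [Field k] [AddCommGroup M] [Module k M] : M →ₗ[k] M :=
  LinearMap.id

def tau (k M : Type) [Field k] [AddCommGroup M] [Module k M] :
    M ⊗[k] M →ₗ[k] M ⊗[k] M :=
  (TensorProduct.comm k M M).toLinearMap

def unassoc (k M : Type) [Field k] [AddCommGroup M] [Module k M] :
    M ⊗[k] (M ⊗[k] M) →ₗ[k] (M ⊗[k] M) ⊗[k] M :=
  (TensorProduct.assoc k M M M).symm.toLinearMap

def intch (k A B : Type) [Field k] [AddCommGroup A] [Module k A]
    [AddCommGroup B] [Module k B] :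
    (A ⊗[k] A) ⊗[k] (B ⊗[k] B) →ₗ[k] (A ⊗[k] B) ⊗[k] (A ⊗[k] B) :=
  (TensorProduct.tensorTensorTensorComm k A A B B).toLinearMap

def IsZinbielCo {k A : Type} [Field k] [AddCommGroup A] [Module k A]
    (ϑ : A →ₗ[k] A ⊗[k] A) : Prop :=
  ∀ a : A,
    TensorProduct.map ϑ (idm k A) (ϑ a)
      + TensorProduct.map (tau k A) (idm k A) (TensorProduct.map ϑ (idm k A) (ϑ a))
    = unassoc k A (TensorProduct.map (idm k A) ϑ (ϑ a))

def IsPermCo {k B : Type} [Field k] [AddCommGroup B] [Module k B]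
    (ν : B →ₗ[k] B ⊗[k] B) : Prop :=
  ∀ b : B,
    TensorProduct.map ν (idm k B) (ν b)
      = unassoc k B (TensorProduct.map (idm k B) ν (ν b)) ∧
    TensorProduct.map ν (idm k B) (ν b)
      = TensorProduct.map (tau k B) (idm k B) (TensorProduct.map ν (idm k B) (ν b))

def IsPreLieCo {k A : Type} [Field k] [AddCommGroup A] [Module k A]
    (θ : A →ₗ[k] A ⊗[k] A) : Prop :=
  ∀ a : A,
    unassoc k A (TensorProduct.map (idm k A) θ (θ a))
      - TensorProduct.map (tau k A) (idm k A)
          (unassoc k A (TensorProduct.map (idm k A) θ (θ a)))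
    = TensorProduct.map θ (idm k A) (θ a)
      - TensorProduct.map (tau k A) (idm k A) (TensorProduct.map θ (idm k A) (θ a))

def Zexp {k A : Type} [Field k] [AddCommGroup A] [Module k A]
    (ast : A →ₗ[k] A →ₗ[k] A) {p : ℕ} (x y : Fin p → A) : (A ⊗[k] A) ⊗[k] A :=
  ∑ i : Fin p, ∑ j : Fin p,
    (((ast (x i) (x j)) ⊗ₜ[k] (y j)) ⊗ₜ[k] (y i)
      + ((y j) ⊗ₜ[k] (ast (x i) (x j))) ⊗ₜ[k] (y i)
      + ((x i) ⊗ₜ[k] (x j)) ⊗ₜ[k] (ast (y i) (y j))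
      + ((x j) ⊗ₜ[k] (x i)) ⊗ₜ[k] (ast (y i) (y j))
      - ((x i) ⊗ₜ[k] (ast (y i) (x j))) ⊗ₜ[k] (y j)
      - ((x j) ⊗ₜ[k] (ast (x i) (y j))) ⊗ₜ[k] (y i)
      - ((ast (x i) (y j)) ⊗ₜ[k] (x j)) ⊗ₜ[k] (y i)
      - ((ast (y i) (x j)) ⊗ₜ[k] (x i)) ⊗ₜ[k] (y j))

def PLexp {k A : Type} [Field k] [AddCommGroup A] [Module k A]
    (circ : A →ₗ[k] A →ₗ[k] A) {p : ℕ} (x y : Fin p → A) : (A ⊗[k] A) ⊗[k] A :=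
  ∑ i : Fin p, ∑ j : Fin p,
    (((circ (x i) (x j)) ⊗ₜ[k] (y j)) ⊗ₜ[k] (y i)
      + ((x j) ⊗ₜ[k] (circ (x i) (y j))) ⊗ₜ[k] (y i)
      + ((circ (y i) (x j)) ⊗ₜ[k] (x i)) ⊗ₜ[k] (y j)
      + ((x j) ⊗ₜ[k] (x i)) ⊗ₜ[k] (circ (y i) (y j))
      - ((y j) ⊗ₜ[k] (circ (x i) (x j))) ⊗ₜ[k] (y i)
      - ((x i) ⊗ₜ[k] (circ (y i) (x j))) ⊗ₜ[k] (y j)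
      - ((circ (x i) (y j)) ⊗ₜ[k] (x j)) ⊗ₜ[k] (y i)
      - ((x i) ⊗ₜ[k] (x j)) ⊗ₜ[k] (circ (y i) (y j)))

def AYexp {k P : Type} [Field k] [AddCommGroup P] [Module k P]
    (m : P →ₗ[k] P →ₗ[k] P) {ι : Type} [Fintype ι] (u v : ι → P) :
    (P ⊗[k] P) ⊗[k] P :=
  ∑ α : ι, ∑ β : ι,
    (((m (u α) (u β)) ⊗ₜ[k] (v α)) ⊗ₜ[k] (v β)
      + ((u α) ⊗ₜ[k] (m (v α) (u β))) ⊗ₜ[k] (v β)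
      - ((u β) ⊗ₜ[k] (u α)) ⊗ₜ[k] (m (v α) (v β)))

def CYexp {k P : Type} [Field k] [AddCommGroup P] [Module k P]
    (br : P →ₗ[k] P →ₗ[k] P) {ι : Type} [Fintype ι] (u v : ι → P) :
    (P ⊗[k] P) ⊗[k] P :=
  ∑ α : ι, ∑ β : ι,
    (((br (u α) (u β)) ⊗ₜ[k] (v α)) ⊗ₜ[k] (v β)
      + ((u α) ⊗ₜ[k] (u β)) ⊗ₜ[k] (br (v α) (v β))
      + ((u α) ⊗ₜ[k] (br (v α) (u β))) ⊗ₜ[k] (v β))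

def sharp (k : Type) [Field k] {V : Type} [AddCommGroup V] [Module k V]
    (s : V ⊗[k] V) (ξ : V →ₗ[k] k) : V :=
  TensorProduct.lid k V (LinearMap.rTensor V ξ s)

abbrev PermB (k : Type) [Field k] : Type := ((ℤ × ℤ) × Fin 2) →₀ k

def bB (k : Type) [Field k] (i₁ i₂ : ℤ) (s : Fin 2) : PermB k :=
  Finsupp.single ((i₁, i₂), s) 1

namespace Stmt9Aux

variable {k B : Type} [Field k] [AddCommGroup B] [Module k B]

section scalars
variable (dia : B →ₗ[k] B →ₗ[k] B) (ω : B →ₗ[k] B →ₗ[k] k)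
variable (hω₁ : ∀ b₁ b₂ : B, ω b₁ b₂ = - ω b₂ b₁)
variable (hω₃ : ∀ b₁ b₂ b₃ : B, ω (dia b₁ b₂) b₃ = ω b₁ (dia b₂ b₃ - dia b₃ b₂))

include hω₁ hω₃ in
lemma omega_I (b f e : B) : ω f (dia b e) = ω (dia b f) e := by
  have h1 : ω (dia b f) e = ω b (dia f e) - ω b (dia e f) := by
    rw [hω₃]; rw [map_sub]
  have h2 : ω (dia b e) f = ω b (dia e f) - ω b (dia f e) := by
    rw [hω₃]; rw [map_sub]
  rw [hω₁ f (dia b e), h2, h1]; ring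

include hω₁ hω₃ in
lemma omega_II (b f e : B) : ω f (dia e b) = ω (dia b f) e - ω (dia f b) e := by
  have h1 : ω (dia f b) e = ω f (dia b e) - ω f (dia e b) := by
    rw [hω₃]; rw [map_sub]
  have h2 := omega_I dia ω hω₁ hω₃ b f e
  rw [h1, ← h2]; ring

end scalars

section expand
variable (ω : B →ₗ[k] B →ₗ[k] k)
variable (hω₁ : ∀ b₁ b₂ : B, ω b₁ b₂ = - ω b₂ b₁)
variable (hω₂ : ∀ b₁ : B, (∀ b₂ : B, ω b₁ b₂ = 0) → b₁ = 0)
variable {n : ℕ} (e : Module.Basis (Fin n) k B) (f : Fin n → B)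
variable (hdual : ∀ i j : Fin n, ω (f i) (e j) = if i = j then 1 else 0)

include hω₂ in
lemma zero_of_e (w : B) (h : ∀ j, ω w (e j) = 0) : w = 0 := by
  apply hω₂
  intro b₂
  have hb : b₂ = ∑ j, e.repr b₂ j • e j := (Module.Basis.sum_repr e b₂).symm
  rw [hb, map_sum]
  simp [map_smul, h]

include hω₂ hdual in
lemma expand_f (v : B) : ∑ j, ω v (e j) • f j = v := by
  have h : v - ∑ j, ω v (e j) • f j = 0 := by
    apply zero_of_e ω hω₂ e
    intro j
    rw [map_sub, map_sum]
    simp only [map_smul, LinearMap.smul_apply, LinearMap.sub_apply, LinearMap.sum_apply,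
      hdual, smul_eq_mul, mul_ite, mul_one, mul_zero]
    rw [Finset.sum_ite_eq' Finset.univ j (fun i => ω v (e i))]
    simp
  exact (sub_eq_zero.mp h).symm

include hω₁ hω₂ hdual in
lemma expand_e (v : B) : ∑ j, ω (f j) v • e j = v := by
  set w := v - ∑ j, ω (f j) v • e j with hw
  have hfw : ∀ i, ω (f i) w = 0 := by
    intro i
    rw [hw, map_sub, map_sum]
    simp only [map_smul, smul_eq_mul, hdual, mul_ite, mul_one, mul_zero]
    rw [Finset.sum_ite_eq Finset.univ i (fun j => ω (f j) v)]
    simp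
  have hzw : w = 0 := by
    apply hω₂
    intro b₂
    rw [hω₁]
    have hb : b₂ = ∑ j, ω b₂ (e j) • f j := (expand_f ω hω₂ e f hdual b₂).symm
    rw [hb]
    rw [map_sum]
    simp only [map_smul, LinearMap.smul_apply, LinearMap.sum_apply]
    simp [hfw]
  rw [hw] at hzw
  exact (sub_eq_zero.mp hzw).symm


include hω₁ hω₂ hdual in
lemma sum_transfer (T Q : B →ₗ[k] B)
    (hTQ : ∀ s j, ω (f s) (T (e j)) = ω (Q (f s)) (e j)) :
    ∑ j, (T (e j)) ⊗ₜ[k] (f j) = ∑ s, (e s) ⊗ₜ[k] (Q (f s)) := by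
  have hl : ∀ j, (T (e j)) ⊗ₜ[k] (f j) = ∑ s, ω (f s) (T (e j)) • ((e s) ⊗ₜ[k] (f j)) := by
    intro j
    conv_lhs => rw [← expand_e ω hω₁ hω₂ e f hdual (T (e j))]
    rw [sum_tmul]
    exact Finset.sum_congr rfl fun s _ => by rw [smul_tmul']
  have hr : ∀ s, (e s) ⊗ₜ[k] (Q (f s)) = ∑ j, ω (Q (f s)) (e j) • ((e s) ⊗ₜ[k] (f j)) := by
    intro s
    conv_lhs => rw [← expand_f ω hω₂ e f hdual (Q (f s))]
    rw [tmul_sum]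
    exact Finset.sum_congr rfl fun j _ => by rw [tmul_smul]
  calc ∑ j, (T (e j)) ⊗ₜ[k] (f j)
      = ∑ j, ∑ s, ω (f s) (T (e j)) • ((e s) ⊗ₜ[k] (f j)) := Finset.sum_congr rfl fun j _ => hl j
    _ = ∑ s, ∑ j, ω (Q (f s)) (e j) • ((e s) ⊗ₜ[k] (f j)) := by
        rw [Finset.sum_comm]
        exact Finset.sum_congr rfl fun s _ => Finset.sum_congr rfl fun j _ => by rw [hTQ]
    _ = ∑ s, (e s) ⊗ₜ[k] (Q (f s)) := Finset.sum_congr rfl fun s _ => (hr s).symm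

include hω₁ hω₂ hdual in
lemma sum_transfer2 (T Q : B →ₗ[k] B)
    (hTQ : ∀ s j, ω (f s) (T (f j)) = ω (f j) (Q (f s))) :
    ∑ j, (T (f j)) ⊗ₜ[k] (e j) = ∑ s, (e s) ⊗ₜ[k] (Q (f s)) := by
  have hl : ∀ j, (T (f j)) ⊗ₜ[k] (e j) = ∑ s, ω (f s) (T (f j)) • ((e s) ⊗ₜ[k] (e j)) := by
    intro j
    conv_lhs => rw [← expand_e ω hω₁ hω₂ e f hdual (T (f j))]
    rw [sum_tmul]
    exact Finset.sum_congr rfl fun s _ => by rw [smul_tmul']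
  have hr : ∀ s, (e s) ⊗ₜ[k] (Q (f s)) = ∑ j, ω (f j) (Q (f s)) • ((e s) ⊗ₜ[k] (e j)) := by
    intro s
    conv_lhs => rw [← expand_e ω hω₁ hω₂ e f hdual (Q (f s))]
    rw [tmul_sum]
    exact Finset.sum_congr rfl fun j _ => by rw [tmul_smul]
  calc ∑ j, (T (f j)) ⊗ₜ[k] (e j)
      = ∑ j, ∑ s, ω (f s) (T (f j)) • ((e s) ⊗ₜ[k] (e j)) := Finset.sum_congr rfl fun j _ => hl j
    _ = ∑ s, ∑ j, ω (f j) (Q (f s)) • ((e s) ⊗ₜ[k] (e j)) := by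
        rw [Finset.sum_comm]
        exact Finset.sum_congr rfl fun s _ => Finset.sum_congr rfl fun j _ => by rw [hTQ]
    _ = ∑ s, (e s) ⊗ₜ[k] (Q (f s)) := Finset.sum_congr rfl fun s _ => (hr s).symm

include hω₁ hdual in
lemma tensor_eq_of_pair (ωh : B ⊗[k] B →ₗ[k] B ⊗[k] B →ₗ[k] k)
    (hωh : ∀ u₁ u₂ v₁ v₂ : B, ωh (u₁ ⊗ₜ[k] u₂) (v₁ ⊗ₜ[k] v₂) = ω u₁ v₁ * ω u₂ v₂)
    (z z' : B ⊗[k] B)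
    (h : ∀ b₂ b₃ : B, ωh z (b₂ ⊗ₜ[k] b₃) = ωh z' (b₂ ⊗ₜ[k] b₃)) : z = z' := by
  set bT : Module.Basis (Fin n × Fin n) k (B ⊗[k] B) := Module.Basis.tensorProduct e e with hbT
  set w := z - z' with hwdef
  have hw : ∀ b₂ b₃ : B, ωh w (b₂ ⊗ₜ[k] b₃) = 0 := by
    intro b₂ b₃
    rw [hwdef, map_sub, LinearMap.sub_apply, h, sub_self]
  have hcoord : ∀ q : Fin n × Fin n, bT.repr w q = 0 := by
    intro ⟨u, v⟩
    have hrepr : w = ∑ q : Fin n × Fin n, bT.repr w q • ((e q.1) ⊗ₜ[k] (e q.2)) := by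
      conv_lhs => rw [← Module.Basis.sum_repr bT w]
      exact Finset.sum_congr rfl fun q _ => by rw [hbT, Module.Basis.tensorProduct_apply']
    have := hw (f u) (f v)
    rw [hrepr, map_sum] at this
    simp only [LinearMap.sum_apply, map_smul, LinearMap.smul_apply, hωh, smul_eq_mul] at this
    have heu : ∀ s u : Fin n, ω (e s) (f u) = if u = s then (-1 : k) else 0 := by
      intro s u
      rw [hω₁, hdual]
      split <;> simp
    rw [Fintype.sum_prod_type] at this
    simp only [heu, mul_ite, ite_mul, mul_one, mul_zero, zero_mul, one_mul, mul_neg,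
      neg_neg, neg_zero, neg_mul, Finset.sum_ite_eq, Finset.mem_univ, if_true,
      Finset.sum_neg_distrib] at this
    simpa using this
  have : bT.repr w = 0 := Finsupp.ext hcoord
  have hw0 : w = 0 := by
    have := congrArg bT.repr.symm this
    simpa using this
  rw [hwdef] at hw0
  exact sub_eq_zero.mp hw0

end expand

section nu
variable (dia : B →ₗ[k] B →ₗ[k] B) (ω : B →ₗ[k] B →ₗ[k] k)
variable (hω₁ : ∀ b₁ b₂ : B, ω b₁ b₂ = - ω b₂ b₁)
variable (hω₂ : ∀ b₁ : B, (∀ b₂ : B, ω b₁ b₂ = 0) → b₁ = 0)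
variable (hω₃ : ∀ b₁ b₂ b₃ : B, ω (dia b₁ b₂) b₃ = ω b₁ (dia b₂ b₃ - dia b₃ b₂))
variable {n : ℕ} (e : Module.Basis (Fin n) k B) (f : Fin n → B)
variable (hdual : ∀ i j : Fin n, ω (f i) (e j) = if i = j then 1 else 0)
variable (ωh : B ⊗[k] B →ₗ[k] B ⊗[k] B →ₗ[k] k)
variable (hωh : ∀ u₁ u₂ v₁ v₂ : B, ωh (u₁ ⊗ₜ[k] u₂) (v₁ ⊗ₜ[k] v₂) = ω u₁ v₁ * ω u₂ v₂)
variable (ν : B →ₗ[k] B ⊗[k] B)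
variable (hν : ∀ b₁ b₂ b₃ : B, ωh (ν b₁) (b₂ ⊗ₜ[k] b₃) = - ω b₁ (dia b₂ b₃))

include hω₁ hω₂ hω₃ hdual hωh hν in
lemma nu_formula (b : B) : ν b = ∑ j, (e j) ⊗ₜ[k] (dia (f j) b) := by
  apply tensor_eq_of_pair ω hω₁ e f hdual ωh hωh
  intro b₂ b₃
  rw [hν]
  have hrhs : ωh (∑ j, (e j) ⊗ₜ[k] (dia (f j) b)) (b₂ ⊗ₜ[k] b₃)
      = ∑ j, ω (e j) b₂ * ω (dia (f j) b) b₃ := by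
    rw [map_sum]
    simp only [LinearMap.sum_apply, hωh]
  rw [hrhs]
  set c : B := dia b b₃ - dia b₃ b with hc
  have h1 : ∀ j, ω (dia (f j) b) b₃ = ω (f j) c := fun j => by rw [hω₃]
  have h2 : (∑ j, ω (e j) b₂ * ω (dia (f j) b) b₃) = ω c b₂ := by
    calc (∑ j, ω (e j) b₂ * ω (dia (f j) b) b₃)
        = ∑ j, ω (f j) c * ω (e j) b₂ := by
          exact Finset.sum_congr rfl fun j _ => by rw [h1 j, mul_comm]
      _ = ω (∑ j, ω (f j) c • e j) b₂ := by
          rw [map_sum]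
          simp only [LinearMap.sum_apply, map_smul, LinearMap.smul_apply, smul_eq_mul]
      _ = ω c b₂ := by rw [expand_e ω hω₁ hω₂ e f hdual]
  rw [h2]
  have h3 : ω c b₂ = - ω b₂ c := hω₁ c b₂
  have h4 : ω b (dia b₂ b₃) = ω b₂ c := by
    rw [hω₁ b (dia b₂ b₃), hω₃ b₂ b₃ b, map_sub, hc, map_sub]
    ring
  rw [h3, h4]

end nu

end Stmt9Aux

set_option maxHeartbeats 2000000

theorem statement9 (k A B : Type) [Field k] [CharZero k]
    [AddCommGroup A] [Module k A] [FiniteDimensional k A]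
    [AddCommGroup B] [Module k B] [FiniteDimensional k B]
    (ast : A →ₗ[k] A →ₗ[k] A) (hast : IsZinbiel ast)
    (r : A ⊗[k] A) (p : ℕ) (x y : Fin p → A)
    (hr : r = ∑ i : Fin p, (x i) ⊗ₜ[k] (y i))
    (hsym : (TensorProduct.comm k A A) r = r)
    (hZ : Zexp ast x y = 0)
    (ϑr : A →ₗ[k] A ⊗[k] A)
    (hϑr : ∀ a : A,
      ϑr a = TensorProduct.map (idm k A) (ast a + ast.flip a) r
        - TensorProduct.map (ast a) (idm k A) r)
    (dia : B →ₗ[k] B →ₗ[k] B) (hdia : IsPerm dia)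
    (ω : B →ₗ[k] B →ₗ[k] k)
    (hω₁ : ∀ b₁ b₂ : B, ω b₁ b₂ = - ω b₂ b₁)
    (hω₂ : ∀ b₁ : B, (∀ b₂ : B, ω b₁ b₂ = 0) → b₁ = 0)
    (hω₃ : ∀ b₁ b₂ b₃ : B, ω (dia b₁ b₂) b₃ = ω b₁ (dia b₂ b₃ - dia b₃ b₂))
    (n : ℕ) (e : Module.Basis (Fin n) k B) (f : Fin n → B)
    (hdual : ∀ i j : Fin n, ω (f i) (e j) = if i = j then 1 else 0)
    (ωh : B ⊗[k] B →ₗ[k] B ⊗[k] B →ₗ[k] k)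
    (hωh : ∀ u₁ u₂ v₁ v₂ : B, ωh (u₁ ⊗ₜ[k] u₂) (v₁ ⊗ₜ[k] v₂) = ω u₁ v₁ * ω u₂ v₂)
    (ν : B →ₗ[k] B ⊗[k] B)
    (hν : ∀ b₁ b₂ b₃ : B, ωh (ν b₁) (b₂ ⊗ₜ[k] b₃) = - ω b₁ (dia b₂ b₃))
    (m : A ⊗[k] B →ₗ[k] A ⊗[k] B →ₗ[k] A ⊗[k] B)
    (hm : ∀ (a₁ a₂ : A) (b₁ b₂ : B),
      m (a₁ ⊗ₜ[k] b₁) (a₂ ⊗ₜ[k] b₂)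
        = (ast a₁ a₂) ⊗ₜ[k] (dia b₁ b₂) + (ast a₂ a₁) ⊗ₜ[k] (dia b₂ b₁))
    (Δ : A ⊗[k] B →ₗ[k] (A ⊗[k] B) ⊗[k] (A ⊗[k] B))
    (hΔ : ∀ (a : A) (b : B),
      Δ (a ⊗ₜ[k] b)
        = intch k A (B) ((ϑr a) ⊗ₜ[k] (ν b))
          + tau k (A ⊗[k] B) (intch k A (B) ((ϑr a) ⊗ₜ[k] (ν b))))
    (rhat : (A ⊗[k] B) ⊗[k] (A ⊗[k] B))
    (hrhat : rhat = ∑ i : Fin p, ∑ j : Fin n,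
      ((x i) ⊗ₜ[k] (e j : B)) ⊗ₜ[k] ((y i) ⊗ₜ[k] (f j)))
    :
    ∀ (a : A) (b : B),
      Δ (a ⊗ₜ[k] b)
        = TensorProduct.map (idm k (A ⊗[k] B)) (m (a ⊗ₜ[k] b)) rhat
          - TensorProduct.map (m (a ⊗ₜ[k] b)) (idm k (A ⊗[k] B)) rhat := by

  intro a b
  -- symmetric r
  have hs : (∑ i, (y i) ⊗ₜ[k] (x i)) = ∑ i, (x i) ⊗ₜ[k] (y i) := by
    have h := hsym
    rw [hr, map_sum] at h
    simpa [TensorProduct.comm_tmul] using h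
  have S1 : (∑ i, (ast a (y i)) ⊗ₜ[k] (x i)) = ∑ i, (ast a (x i)) ⊗ₜ[k] (y i) := by
    have h := congrArg (TensorProduct.map (ast a) (LinearMap.id : A →ₗ[k] A)) hs
    simpa [map_sum] using h
  have S2 : (∑ i, (ast (y i) a) ⊗ₜ[k] (x i)) = ∑ i, (ast (x i) a) ⊗ₜ[k] (y i) := by
    have h := congrArg (TensorProduct.map (ast.flip a) (LinearMap.id : A →ₗ[k] A)) hs
    simpa [map_sum, LinearMap.flip_apply] using h
  have S3 : (∑ i, (y i) ⊗ₜ[k] (ast a (x i))) = ∑ i, (x i) ⊗ₜ[k] (ast a (y i)) := by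
    have h := congrArg (TensorProduct.map (LinearMap.id : A →ₗ[k] A) (ast a)) hs
    simpa [map_sum] using h
  set U1 : A ⊗[k] A := ∑ i, (x i) ⊗ₜ[k] (ast a (y i)) with hU1
  set U2 : A ⊗[k] A := ∑ i, (x i) ⊗ₜ[k] (ast (y i) a) with hU2
  set U3 : A ⊗[k] A := ∑ i, (ast a (x i)) ⊗ₜ[k] (y i) with hU3
  set U4 : A ⊗[k] A := ∑ i, (ast (x i) a) ⊗ₜ[k] (y i) with hU4
  set piL : B ⊗[k] B := ∑ j, (e j) ⊗ₜ[k] (dia b (f j)) with hpiL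
  set piR : B ⊗[k] B := ∑ j, (e j) ⊗ₜ[k] (dia (f j) b) with hpiR
  have H1 : (∑ j, (dia b (e j)) ⊗ₜ[k] (f j)) = piL := by
    rw [hpiL]
    exact Stmt9Aux.sum_transfer ω hω₁ hω₂ e f hdual (dia b) (dia b)
      (fun s j => Stmt9Aux.omega_I dia ω hω₁ hω₃ b (f s) (e j))
  have H2 : (∑ j, (dia (e j) b) ⊗ₜ[k] (f j)) = piL - piR := by
    rw [hpiL, hpiR]
    have h := Stmt9Aux.sum_transfer ω hω₁ hω₂ e f hdual (dia.flip b) (dia b - dia.flip b)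
      (fun s j => by
        simp only [LinearMap.sub_apply, LinearMap.flip_apply, map_sub]
        exact Stmt9Aux.omega_II dia ω hω₁ hω₃ b (f s) (e j))
    simp only [LinearMap.sub_apply, LinearMap.flip_apply, tmul_sub,
      Finset.sum_sub_distrib] at h
    exact h
  have H3 : (∑ j, (dia (f j) b) ⊗ₜ[k] (e j)) = piR - piL := by
    rw [hpiL, hpiR]
    have h := Stmt9Aux.sum_transfer2 ω hω₁ hω₂ e f hdual (dia.flip b) (dia.flip b - dia b)
      (fun s j => by
        simp only [LinearMap.sub_apply, LinearMap.flip_apply, map_sub]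
        have hA := Stmt9Aux.omega_II dia ω hω₁ hω₃ b (f j) (f s)
        have hB := Stmt9Aux.omega_I dia ω hω₁ hω₃ b (f j) (f s)
        have hC := hω₁ (f s) (dia (f j) b)
        linear_combination hC - hA + hB)
    simp only [LinearMap.sub_apply, LinearMap.flip_apply, tmul_sub,
      Finset.sum_sub_distrib] at h
    exact h
  have hnu : ν b = piR := by
    rw [hpiR]
    exact Stmt9Aux.nu_formula dia ω hω₁ hω₂ hω₃ e f hdual ωh hωh ν hν b
  have hTheta : ϑr a = U1 + U2 - U3 := by
    rw [hϑr a, hr, hU1, hU2, hU3, map_sum, map_sum]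
    simp only [TensorProduct.map_tmul, LinearMap.add_apply, LinearMap.flip_apply, idm,
      LinearMap.id_coe, id_eq, tmul_add]
    rw [Finset.sum_add_distrib]
  have t1 : tau k A U1 = U3 := by
    rw [hU1, hU3]
    simp only [tau, LinearEquiv.coe_coe, map_sum, TensorProduct.comm_tmul]
    exact S1
  have t2 : tau k A U2 = U4 := by
    rw [hU2, hU4]
    simp only [tau, LinearEquiv.coe_coe, map_sum, TensorProduct.comm_tmul]
    exact S2
  have t3 : tau k A U3 = U1 := by
    rw [hU3, hU1]
    simp only [tau, LinearEquiv.coe_coe, map_sum, TensorProduct.comm_tmul]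
    exact S3
  have hTauTheta : tau k A (ϑr a) = U3 + U4 - U1 := by
    rw [hTheta, map_sub, map_add, t1, t2, t3]
  have hTauPi : tau k B piR = piR - piL := by
    conv_lhs => rw [hpiR]
    rw [show tau k B (∑ j, (e j) ⊗ₜ[k] (dia (f j) b))
        = ∑ j, (dia (f j) b) ⊗ₜ[k] (e j) by
      simp only [tau, LinearEquiv.coe_coe, map_sum, TensorProduct.comm_tmul]]
    exact H3
  have key : ∀ (z₁ : A ⊗[k] A) (z₂ : B ⊗[k] B),
      tau k (A ⊗[k] B) (intch k A B (z₁ ⊗ₜ[k] z₂))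
        = intch k A B ((tau k A z₁) ⊗ₜ[k] (tau k B z₂)) := by
    intro z₁ z₂
    induction z₁ using TensorProduct.induction_on with
    | zero => simp
    | tmul a₁ a₂ =>
      induction z₂ using TensorProduct.induction_on with
      | zero => simp
      | tmul b₁ b₂ =>
        simp [intch, tau, TensorProduct.tensorTensorTensorComm_tmul,
          TensorProduct.comm_tmul]
      | add u v hu hv => simp only [tmul_add, map_add, hu, hv]
    | add u v hu hv => simp only [add_tmul, map_add, hu, hv]
  have hElem : (U1 + U2 - U3) ⊗ₜ[k] piR + (U3 + U4 - U1) ⊗ₜ[k] (piR - piL)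
      = U1 ⊗ₜ[k] piL + U2 ⊗ₜ[k] piR
        - U3 ⊗ₜ[k] (∑ j, (dia b (e j)) ⊗ₜ[k] (f j))
        - U4 ⊗ₜ[k] (∑ j, (dia (e j) b) ⊗ₜ[k] (f j)) := by
    rw [H1, H2]
    simp only [add_tmul, sub_tmul, tmul_add, tmul_sub]
    abel
  rw [hΔ a b, hnu, key (ϑr a) piR, hTauTheta, hTauPi, hTheta,
    ← LinearMap.map_add (intch k A B), hElem, hrhat, hU1, hU2, hU3, hU4, hpiL, hpiR]
  simp only [map_sum, map_sub, map_add, TensorProduct.map_tmul, hm, idm, LinearMap.id_coe,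
    id_eq, sum_tmul, tmul_sum, intch, LinearEquiv.coe_coe,
    TensorProduct.tensorTensorTensorComm_tmul, tmul_add, add_tmul,
    Finset.sum_add_distrib, Finset.sum_sub_distrib]
  have swap : ∀ (g : Fin p → Fin n → (A ⊗[k] B) ⊗[k] (A ⊗[k] B)),
      (∑ j : Fin n, ∑ i : Fin p, g i j) = ∑ i : Fin p, ∑ j : Fin n, g i j :=
    fun g => Finset.sum_comm
  conv_lhs => rw [swap]; rw [swap]; rw [swap]; rw [swap]
  abel
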